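/- The maximal k-point left Riemann sum under the triangle y = x on [0,1] equals (1/2)·(k/(k+1)), attained by the partition {1/(k+1), 2/(k+1), …, k/(k+1)}; i.e., sup over 0 ≤ x₁ ≤ … ≤ x_k ≤ 1 of Σ_{i=1}^{k} x_i (x_{i+1} − x_i) (with x_{k+1} = 1) equals k/(2(k+1)). -/

import Mathlib

open Finset

private lemma icc_to_range (k : ℕ) (F : ℕ → ℝ) :
    ∑ i ∈ Icc 1 k, F i = ∑ i ∈ range k, F (i + 1) := by
  rw [← Finset.Ico_add_one_right_eq_Icc, Finset.sum_Ico_eq_sum_range]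
  simp [add_comm]

private lemma gauss (k : ℕ) : ∑ i ∈ Icc 1 k, (i : ℝ) = k * (k + 1) / 2 := by
  induction k with
  | zero => simp
  | succ n ih =>
      rw [Finset.sum_Icc_succ_top (by omega)]
      push_cast
      rw [ih]; ring

private lemma sumval (k : ℕ) :
    ∑ i ∈ Icc 1 k, ((i:ℝ)/((k:ℝ)+1)) * (((i:ℝ)+1)/((k:ℝ)+1) - (i:ℝ)/((k:ℝ)+1))
      = (k:ℝ) / (2*((k:ℝ)+1)) := by
  have hk1 : ((k:ℝ) + 1) ≠ 0 := by positivity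
  have h : ∀ i ∈ Icc 1 k, ((i:ℝ)/((k:ℝ)+1)) * (((i:ℝ)+1)/((k:ℝ)+1) - (i:ℝ)/((k:ℝ)+1))
      = (i:ℝ) * (1/(((k:ℝ)+1)*((k:ℝ)+1))) := by
    intro i _
    field_simp
    ring
  rw [Finset.sum_congr rfl h, ← Finset.sum_mul, gauss]
  field_simp

theorem max_left_sum_unit_triangle (k : ℕ) (hk : 1 ≤ k) :
    IsGreatest
      {s : ℝ | ∃ x : ℕ → ℝ,
        (∀ i, 1 ≤ i → i ≤ k → 0 ≤ x i ∧ x i ≤ 1) ∧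
        (∀ i j, 1 ≤ i → i ≤ j → j ≤ k → x i ≤ x j) ∧
        x (k+1) = 1 ∧
        s = ∑ i ∈ Icc 1 k, x i * (x (i+1) - x i)}
      ((k:ℝ) / (2*((k:ℝ)+1))) ∧
    (∑ i ∈ Icc 1 k, ((i:ℝ)/((k:ℝ)+1)) * (((i:ℝ)+1)/((k:ℝ)+1) - (i:ℝ)/((k:ℝ)+1))
      = (k:ℝ) / (2*((k:ℝ)+1))) := by
  have hk1 : (0:ℝ) < (k:ℝ) + 1 := by positivity
  constructor
  · constructor
    · -- membership: the equidistant partition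
      refine ⟨fun i => (i:ℝ) / ((k:ℝ)+1), ?_, ?_, ?_, ?_⟩
      · intro i h1 h2
        constructor
        · positivity
        · rw [div_le_one hk1]
          have : (i:ℝ) ≤ (k:ℝ) := by exact_mod_cast h2
          linarith
      · intro i j _ hij _
        have h : (i:ℝ) ≤ (j:ℝ) := by exact_mod_cast hij
        show (i:ℝ)/((k:ℝ)+1) ≤ (j:ℝ)/((k:ℝ)+1)
        gcongr
      · push_cast; field_simp
      · rw [← sumval k]
        apply Finset.sum_congr rfl
        intro i _
        push_cast
        ring
    · -- upper bound
      rintro s ⟨x, hb, _, hend, hs⟩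
      -- telescoping identity
      have tele : ∀ f : ℕ → ℝ, ∑ i ∈ Icc 1 k, (f (i+1) - f i) = f (k+1) - f 1 := by
        intro f
        rw [icc_to_range]
        exact Finset.sum_range_sub (fun i => f (i+1)) k
      have key : 2 * s = 1 - ((x 1)^2 + ∑ i ∈ Icc 1 k, (x (i+1) - x i)^2) := by
        have h3 := tele (fun i => (x i)^2)
        simp only [hend, one_pow] at h3
        have h2 : ∑ i ∈ Icc 1 k, ((x (i+1))^2 - (x i)^2)
            = ∑ i ∈ Icc 1 k, (2 * (x i * (x (i+1) - x i)) + (x (i+1) - x i)^2) := by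
          apply Finset.sum_congr rfl; intro i _; ring
        rw [h2, Finset.sum_add_distrib] at h3
        rw [hs, Finset.mul_sum]
        linarith [h3]
      -- Cauchy-Schwarz on the k+1 increments (x₀ = 0)
      set g : ℕ → ℝ := fun i => if i = 0 then x 1 else x (i+1) - x i with hg
      have hsum : ∑ i ∈ range (k+1), g i = 1 := by
        rw [Finset.sum_range_succ']
        have h : ∀ i ∈ range k, g (i+1) = x (i+2) - x (i+1) := by
          intro i _; simp [hg]
        rw [Finset.sum_congr rfl h]
        have ht := Finset.sum_range_sub (fun i => x (i+1)) k
        rw [ht]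
        simp [hg, hend]
      have hsq : ∑ i ∈ range (k+1), (g i)^2
          = (x 1)^2 + ∑ i ∈ Icc 1 k, (x (i+1) - x i)^2 := by
        rw [Finset.sum_range_succ']
        have h : ∀ i ∈ range k, (g (i+1))^2 = (x (i+1+1) - x (i+1))^2 := by
          intro i _; simp [hg]
        rw [Finset.sum_congr rfl h, icc_to_range]
        simp [hg]
        ring
      have CS := sq_sum_le_card_mul_sum_sq (s := range (k+1)) (f := g)
      rw [hsum, hsq, Finset.card_range] at CS
      have hcard : ((k+1 : ℕ) : ℝ) = (k:ℝ) + 1 := by push_cast; ring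
      rw [hcard] at CS
      rw [le_div_iff₀ (by positivity : (0:ℝ) < 2*((k:ℝ)+1))]
      nlinarith [CS, key, hk1]
  · exact sumval k
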